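/- arXiv:math/0212275 — 7 statements merged into one kernel-verified Lean document; each statement's English description precedes it below -/
import Mathlib

section
/- Hunt–Dyson formula: For every m ∈ ℕ (m ≥ 1) and all real numbers κ_1, …, κ_m, one has ∑_{τ ∈ S_m} [ M_m(κ_τ) − M_{m−1}(κ_τ) ] = ∑_{τ ∈ S_m} min(0, κ_{τ(1)} + ⋯ + κ_{τ(m)}) / m = (m−1)! · min(0, κ_1 + ⋯ + κ_m). -/
open Finset
open Fin.NatCast

/-- inf' of a function minus a constant. -/
lemma hd_inf'_sub_const {ι : Type*} (s : Finset ι) (hs : s.Nonempty) (f : ι → ℝ) (c : ℝ) :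
    s.inf' hs (fun i => f i - c) = s.inf' hs f - c := by
  apply le_antisymm
  · obtain ⟨i, hi, h⟩ := s.exists_mem_eq_inf' hs f
    rw [h]
    exact Finset.inf'_le _ hi
  · apply Finset.le_inf'
    intro i hi
    exact sub_le_sub_right (Finset.inf'_le _ hi) c

/-- inf' of a function plus a constant. -/
lemma hd_inf'_add_const {ι : Type*} (s : Finset ι) (hs : s.Nonempty) (f : ι → ℝ) (c : ℝ) :
    s.inf' hs (fun i => f i + c) = s.inf' hs f + c := by
  have := hd_inf'_sub_const s hs (fun i => f i + c) c
  simp only [add_sub_cancel_right] at this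
  linarith [this]

/-- Splitting the inf over `range (n+1)` at the bottom. -/
lemma hd_inf'_range_succ_bot (n : ℕ) (f : ℕ → ℝ)
    (hne : (Finset.range n).Nonempty) :
    (Finset.range (n+1)).inf' Finset.nonempty_range_add_one f
      = min (f 0) ((Finset.range n).inf' hne (fun i => f (i+1))) := by
  apply le_antisymm
  · apply le_min
    · exact Finset.inf'_le _ (by simp)
    · apply Finset.le_inf'
      intro i hi
      exact Finset.inf'_le _ (by simp at hi ⊢; omega)
  · apply Finset.le_inf'
    intro i hi
    rcases Nat.eq_zero_or_pos i with h0 | h0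
    · subst h0; exact min_le_left _ _
    · refine le_trans (min_le_right _ _) ?_
      have hmem : i - 1 ∈ Finset.range n := by simp at hi ⊢; omega
      have := Finset.inf'_le (fun i => f (i+1)) hmem
      simpa only [Nat.sub_add_cancel h0] using this

/-- Splitting a sum over `range (j+i)`. -/
lemma hd_sum_range_add (b : ℕ → ℝ) (j i : ℕ) :
    ∑ k ∈ Finset.range (j+i), b k
      = (∑ k ∈ Finset.range j, b k) + ∑ k ∈ Finset.range i, b (j+k) := by
  induction i with
  | zero => simp
  | succ i ih =>
      rw [show j + (i+1) = (j+i)+1 by omega, Finset.sum_range_succ, ih,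
        Finset.sum_range_succ]
      ring

/-- The cycle lemma: sum over cyclic shifts of the window-min differences. -/
lemma hd_cycle (m : ℕ) (hm : 1 ≤ m) (S : ℕ → ℝ) (h0 : S 0 = 0)
    (hper : ∀ n, S (n + m) = S n + S m)
    (hne : (Finset.range m).Nonempty) :
    ∑ j ∈ Finset.range m,
      ((Finset.range (m+1)).inf' Finset.nonempty_range_add_one (fun i => S (j+i))
        - (Finset.range m).inf' hne (fun i => S (j+i)))
      = min 0 (S m) := by
  set g : ℕ → ℝ := fun j => (Finset.range m).inf' hne (fun i => S (j+i)) with hg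
  have hgle : ∀ j, ∀ i ∈ Finset.range m, g j ≤ S (j + i) := by
    intro j i hi; exact Finset.inf'_le _ hi
  rcases le_or_gt 0 (S m) with hSm | hSm
  · -- nonnegative case: every term vanishes
    have hterm : ∀ j ∈ Finset.range m,
        ((Finset.range (m+1)).inf' Finset.nonempty_range_add_one (fun i => S (j+i)) - g j) = 0 := by
      intro j _
      have : (Finset.range (m+1)).inf' Finset.nonempty_range_add_one (fun i => S (j+i)) = g j := by
        apply le_antisymm
        · apply Finset.le_inf' hne
          intro i hi
          exact Finset.inf'_le _ (by simp at hi ⊢; omega)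
        · apply Finset.le_inf'
          intro i hi
          simp only [Finset.mem_range] at hi
          rcases Nat.lt_or_ge i m with h | h
          · exact hgle j i (by simpa using h)
          · have : i = m := by omega
            subst this
            have h1 := hgle j 0 (by simp; omega)
            simp only [add_zero] at h1
            rw [hper j]
            linarith
      rw [this, sub_self]
    rw [Finset.sum_congr rfl hterm]
    simp [min_eq_left hSm]
  · -- negative case: telescoping
    have hterm : ∀ j ∈ Finset.range m,
        ((Finset.range (m+1)).inf' Finset.nonempty_range_add_one (fun i => S (j+i)) - g j)
          = g (j+1) - g j := by
      intro j _
      congr 1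
      rw [hd_inf'_range_succ_bot m _ hne]
      have heq : (Finset.range m).inf' hne (fun i => S (j + (i+1))) = g (j+1) := by
        apply Finset.inf'_congr hne rfl
        intro i _
        congr 1
        omega
      rw [heq, add_zero]
      apply min_eq_right
      have h1 : g (j+1) ≤ S (j + m) := by
        have := hgle (j+1) (m-1) (by simp; omega)
        have e : j + 1 + (m - 1) = j + m := by omega
        rwa [e] at this
      rw [hper j] at h1
      linarith
    rw [Finset.sum_congr rfl hterm, Finset.sum_range_sub g]
    have hgm : g m = g 0 + S m := by
      have h1 : g m = (Finset.range m).inf' hne (fun i => S (i + m)) := by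
        apply Finset.inf'_congr hne rfl
        intro i _; congr 1; omega
      have h2 : (Finset.range m).inf' hne (fun i => S (i + m))
          = (Finset.range m).inf' hne (fun i => S i + S m) := by
        apply Finset.inf'_congr hne rfl
        intro i _; exact hper i
      rw [h1, h2, hd_inf'_add_const]
      congr 1
      apply Finset.inf'_congr hne rfl
      intro i _; simp
    rw [hgm, min_eq_right (le_of_lt hSm)]
    ring

/-- `partialMin m κ p` is `min(0, κ₁, κ₁+κ₂, …, κ₁+⋯+κ_p)`,
the minimum of `0` and the first `p` partial sums of `κ`. -/
noncomputable def partialMin (m : ℕ) (κ : Fin m → ℝ) (p : ℕ) : ℝ :=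
  (Finset.range (p + 1)).inf' Finset.nonempty_range_add_one
    (fun i => ∑ t : Fin m, if (t : ℕ) < i then κ t else 0)

/-- Partial sums of `f` along the natural enumeration of `Fin m`, extended periodically. -/
noncomputable def hdS (m : ℕ) [NeZero m] (f : Fin m → ℝ) (n : ℕ) : ℝ :=
  ∑ k ∈ Finset.range n, f ((k : Fin m))

/-- `partialMin` of a cyclically shifted sequence in terms of windows of partial sums. -/
lemma hd_partialMin_shift (m : ℕ) [NeZero m] (f : Fin m → ℝ) (j p : ℕ) (hp : p ≤ m) :
    partialMin m (fun i => f (i + (j : Fin m))) p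
      = (Finset.range (p+1)).inf' Finset.nonempty_range_add_one (fun i => hdS m f (j+i))
        - hdS m f j := by
  unfold partialMin
  rw [← hd_inf'_sub_const]
  apply Finset.inf'_congr Finset.nonempty_range_add_one rfl
  intro i hi
  simp only [Finset.mem_range] at hi
  have hik : i ≤ m := by omega
  unfold hdS
  rw [hd_sum_range_add]
  have hF : ∀ t : Fin m, (if (t : ℕ) < i then f (t + (j : Fin m)) else 0)
      = (fun k : ℕ => if k < i then f ((k : Fin m) + (j : Fin m)) else 0) (t : ℕ) := by
    intro t
    simp [Fin.cast_val_eq_self]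
  rw [Finset.sum_congr rfl (fun t _ => hF t),
    Fin.sum_univ_eq_sum_range (fun k : ℕ => if k < i then f ((k : Fin m) + (j : Fin m)) else 0) m,
    ← Finset.sum_subset (Finset.range_subset_range.mpr hik)
      (fun x _ hx => if_neg (by simpa using hx))]
  have : ∑ k ∈ Finset.range i, (if k < i then f ((k : Fin m) + (j : Fin m)) else 0)
      = ∑ k ∈ Finset.range i, f ((j + k : ℕ) : Fin m) := by
    apply Finset.sum_congr rfl
    intro k hk
    simp only [Finset.mem_range] at hk
    rw [if_pos hk]
    congr 1
    push_cast
    exact add_comm _ _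
  rw [this]
  ring

/-- The Hunt–Dyson formula. -/
theorem hunt_dyson (m : ℕ) (hm : 1 ≤ m) (κ : Fin m → ℝ) :
    (∑ τ : Equiv.Perm (Fin m),
        (partialMin m (fun i => κ (τ i)) m - partialMin m (fun i => κ (τ i)) (m - 1))
      = ∑ τ : Equiv.Perm (Fin m), min 0 (∑ i : Fin m, κ (τ i)) / (m : ℝ))
    ∧ (∑ τ : Equiv.Perm (Fin m),
        (partialMin m (fun i => κ (τ i)) m - partialMin m (fun i => κ (τ i)) (m - 1))
      = ((m - 1).factorial : ℝ) * min 0 (∑ i : Fin m, κ i)) := by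
  haveI : NeZero m := ⟨by omega⟩
  have hne : (Finset.range m).Nonempty := Finset.nonempty_range_iff.mpr (by omega)
  set D : Equiv.Perm (Fin m) → ℝ := fun σ =>
    partialMin m (fun i => κ (σ i)) m - partialMin m (fun i => κ (σ i)) (m - 1) with hD
  set Sig : ℝ := ∑ i : Fin m, κ i with hSig
  -- the per-permutation cycle identity
  have key : ∀ τ : Equiv.Perm (Fin m),
      ∑ j ∈ Finset.range m, D (τ * Equiv.addRight ((j : ℕ) : Fin m)) = min 0 Sig := by
    intro τ
    set f : Fin m → ℝ := fun i => κ (τ i) with hf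
    set S : ℕ → ℝ := hdS m f with hS
    have hSm : S m = Sig := by
      have h1 : S m = ∑ t : Fin m, f ((t : ℕ) : Fin m) := by
        rw [hS, hdS, Fin.sum_univ_eq_sum_range (fun k : ℕ => f ((k : Fin m))) m]
      have h2 : ∑ t : Fin m, f (((t : ℕ) : Fin m)) = ∑ t : Fin m, f t := by
        apply Finset.sum_congr rfl
        intro t _
        rw [Fin.cast_val_eq_self]
      rw [h1, h2, hf, hSig]
      exact Equiv.sum_comp τ κ
    have hper : ∀ n, S (n + m) = S n + S m := by
      intro n
      induction n with
      | zero => simp [hS, hdS]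
      | succ n ih =>
          have e1 : n + 1 + m = (n + m) + 1 := by omega
          have hb : f (((n + m : ℕ) : Fin m)) = f ((n : Fin m)) := by
            congr 1
            push_cast
            simp
          have hstep : ∀ k : ℕ, S (k+1) = S k + f ((k : Fin m)) :=
            fun k => Finset.sum_range_succ (fun k : ℕ => f ((k : Fin m))) k
          rw [e1, hstep, ih, hb, hstep n]
          ring
    have hDj : ∀ j ∈ Finset.range m, D (τ * Equiv.addRight ((j : ℕ) : Fin m))
        = (Finset.range (m+1)).inf' Finset.nonempty_range_add_one (fun i => S (j+i))
          - (Finset.range m).inf' hne (fun i => S (j+i)) := by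
      intro j _
      have hcomp : (fun i => κ ((τ * Equiv.addRight ((j : ℕ) : Fin m)) i))
          = fun i => f (i + ((j : ℕ) : Fin m)) := by
        funext i
        simp [hf, Equiv.Perm.mul_apply]
      rw [hD]
      simp only [hcomp]
      rw [hd_partialMin_shift m f j m le_rfl,
        hd_partialMin_shift m f j (m-1) (by omega), ← hS]
      have e2 : (Finset.range (m-1+1)).inf' Finset.nonempty_range_add_one (fun i => S (j+i))
          = (Finset.range m).inf' hne (fun i => S (j+i)) :=
        Finset.inf'_congr Finset.nonempty_range_add_one (by congr 1; omega) (fun x _ => rfl)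
      rw [e2]
      ring
    rw [Finset.sum_congr rfl hDj, hd_cycle m hm S (by simp [hS, hdS]) hper hne, hSm]
  -- double counting
  have count1 : ∑ τ : Equiv.Perm (Fin m),
      ∑ j ∈ Finset.range m, D (τ * Equiv.addRight ((j : ℕ) : Fin m))
      = (m.factorial : ℝ) * min 0 Sig := by
    rw [Finset.sum_congr rfl (fun τ _ => key τ), Finset.sum_const, Finset.card_univ,
      Fintype.card_perm, Fintype.card_fin, nsmul_eq_mul]
  have count2 : ∑ τ : Equiv.Perm (Fin m),
      ∑ j ∈ Finset.range m, D (τ * Equiv.addRight ((j : ℕ) : Fin m))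
      = (m : ℝ) * ∑ τ : Equiv.Perm (Fin m), D τ := by
    rw [Finset.sum_comm]
    have hinner : ∀ j ∈ Finset.range m,
        ∑ τ : Equiv.Perm (Fin m), D (τ * Equiv.addRight ((j : ℕ) : Fin m))
          = ∑ τ : Equiv.Perm (Fin m), D τ := by
      intro j _
      exact Fintype.sum_equiv (Equiv.mulRight (Equiv.addRight ((j : ℕ) : Fin m)))
        _ _ (fun τ => rfl)
    rw [Finset.sum_congr rfl hinner, Finset.sum_const, Finset.card_range, nsmul_eq_mul]
  have hm0 : (m : ℝ) ≠ 0 := by positivity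
  have hfact : (m.factorial : ℝ) = (m : ℝ) * ((m-1).factorial : ℝ) := by
    have : m.factorial = m * (m-1).factorial := by
      conv_lhs => rw [show m = (m-1) + 1 from by omega]
      rw [Nat.factorial_succ]
      congr 1
      omega
    rw [this]
    push_cast
    ring
  have main2 : ∑ τ : Equiv.Perm (Fin m), D τ = ((m-1).factorial : ℝ) * min 0 Sig := by
    apply mul_left_cancel₀ hm0
    rw [← count2, count1, hfact]
    ring
  constructor
  · rw [main2]
    have : ∀ τ : Equiv.Perm (Fin m), min 0 (∑ i : Fin m, κ (τ i)) / (m : ℝ)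
        = min 0 Sig / (m : ℝ) := by
      intro τ
      rw [hSig, Equiv.sum_comp τ κ]
    rw [Finset.sum_congr rfl (fun τ _ => this τ), Finset.sum_const, Finset.card_univ,
      Fintype.card_perm, Fintype.card_fin, nsmul_eq_mul, hfact]
    field_simp
  · exact main2
end

section
/- Hunt–Dyson formula over the cyclic subgroup: Let m ∈ ℕ (m ≥ 1), let κ_1, …, κ_m be real numbers, and let σ be the cyclic permutation (1 2 ⋯ m) of {1,…,m}. Then ∑_{i=0}^{m−1} [ M_m(κ_{σ^i}) − M_{m−1}(κ_{σ^i}) ] = min(0, κ_1 + ⋯ + κ_m), where the sum runs over the m elements σ^0, σ^1, …, σ^{m−1} of the cyclic subgroup C_m of S_m. -/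
open Finset

namespace HuntDyson

open scoped Fin.NatCast Fin.CommRing

noncomputable def P (n : ℕ) (κ : Fin (n+1) → ℝ) (k : ℕ) : ℝ :=
  ∑ j ∈ Finset.range k, κ (j : Fin (n+1))

lemma P_succ (n : ℕ) (κ : Fin (n+1) → ℝ) (k : ℕ) :
    P n κ (k+1) = P n κ k + κ (k : Fin (n+1)) := Finset.sum_range_succ _ _

lemma P_add (n : ℕ) (κ : Fin (n+1) → ℝ) (i j : ℕ) :
    P n κ (i + j) = P n κ i + ∑ t ∈ Finset.range j, κ ((i + t : ℕ) : Fin (n+1)) := by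
  induction j with
  | zero => simp [P]
  | succ j ih =>
    rw [← add_assoc, P_succ, ih, Finset.sum_range_succ, ← add_assoc]

lemma P_period (n : ℕ) (κ : Fin (n+1) → ℝ) (k : ℕ) :
    P n κ (k + (n+1)) = P n κ k + P n κ (n+1) := by
  induction k with
  | zero => simp [P]
  | succ k ih =>
    have hcast : ((k + (n+1) : ℕ) : Fin (n+1)) = (k : Fin (n+1)) := by
      push_cast
      simp
    calc P n κ (k + 1 + (n+1)) = P n κ ((k + (n+1)) + 1) := congrArg (P n κ) (by omega)
      _ = P n κ (k + (n+1)) + κ ((k + (n+1) : ℕ) : Fin (n+1)) := P_succ _ _ _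
      _ = P n κ k + P n κ (n+1) + κ ((k : ℕ) : Fin (n+1)) := by rw [ih, hcast]
      _ = P n κ (k+1) + P n κ (n+1) := by rw [P_succ n κ k]; ring

lemma P_full (n : ℕ) (κ : Fin (n+1) → ℝ) :
    P n κ (n+1) = ∑ t : Fin (n+1), κ t := by
  rw [P, ← Fin.sum_univ_eq_sum_range (fun j => κ (j : Fin (n+1)))]
  simp [Fin.cast_val_eq_self]

lemma rotate_pow (n i : ℕ) (t : Fin (n+1)) :
    ((finRotate (n+1)) ^ i) t = t + (i : Fin (n+1)) := by
  induction i generalizing t with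
  | zero => simp
  | succ i ih =>
    rw [pow_succ, Equiv.Perm.mul_apply, finRotate_succ_apply, ih]
    push_cast
    ring

lemma inf'_sub_const {s : Finset ℕ} (h : s.Nonempty) (g : ℕ → ℝ) (c : ℝ) :
    s.inf' h (fun j => g j - c) = s.inf' h g - c := by
  apply le_antisymm
  · obtain ⟨a, ha, he⟩ := Finset.exists_mem_eq_inf' h g
    rw [he]
    have := Finset.inf'_le (fun j => g j - c) ha
    exact this
  · obtain ⟨a, ha, he⟩ := Finset.exists_mem_eq_inf' h (fun j => g j - c)
    rw [he]
    have := Finset.inf'_le (fun j => g j) ha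
    linarith

lemma inf'_add_const {s : Finset ℕ} (h : s.Nonempty) (g : ℕ → ℝ) (c : ℝ) :
    s.inf' h (fun j => g j + c) = s.inf' h g + c := by
  have := inf'_sub_const h (fun j => g j + c) c
  simp only [add_sub_cancel_right] at this
  linarith


noncomputable def F (n : ℕ) (κ : Fin (n+1) → ℝ) (i : ℕ) : ℝ :=
  (Finset.range (n+1)).inf' Finset.nonempty_range_add_one (fun j => P n κ (i + j))

lemma F_le (n : ℕ) (κ : Fin (n+1) → ℝ) (i j : ℕ) (hj : j ≤ n) :
    F n κ i ≤ P n κ (i + j) :=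
  Finset.inf'_le _ (Finset.mem_range.mpr (by omega))

lemma key (n : ℕ) (κ : Fin (n+1) → ℝ) (i p : ℕ) (hp : p ≤ n+1) :
    partialMin (n+1) (fun t => κ (((finRotate (n+1)) ^ i) t)) p
      = (Finset.range (p+1)).inf' Finset.nonempty_range_add_one (fun j => P n κ (i + j))
        - P n κ i := by
  rw [partialMin, ← inf'_sub_const Finset.nonempty_range_add_one (fun j => P n κ (i + j))]
  apply Finset.inf'_congr _ rfl
  intro j hj
  have e1 : ∀ t : Fin (n+1),
      κ (((finRotate (n+1)) ^ i) t) = κ (((t : ℕ) + i : ℕ) : Fin (n+1)) := by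
    intro t
    rw [rotate_pow]
    congr 1
    push_cast [Fin.cast_val_eq_self]
    rfl
  simp only [e1]
  rw [Fin.sum_univ_eq_sum_range (fun t => if t < j then κ ((t + i : ℕ) : Fin (n+1)) else 0)]
  rw [← Finset.sum_filter]
  have hj' : j ≤ n+1 := by
    have := Finset.mem_range.mp hj; omega
  have hf : (Finset.range (n+1)).filter (fun t => t < j) = Finset.range j := by
    ext t; simp only [Finset.mem_filter, Finset.mem_range]; omega
  rw [hf, P_add]
  have : ∀ t ∈ Finset.range j,
      κ ((t + i : ℕ) : Fin (n+1)) = κ ((i + t : ℕ) : Fin (n+1)) := by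
    intro t _; exact congrArg (fun x : ℕ => κ (x : Fin (n+1))) (Nat.add_comm t i)
  rw [Finset.sum_congr rfl this]
  ring

lemma G_min (n : ℕ) (κ : Fin (n+1) → ℝ) (i : ℕ) :
    (Finset.range (n+1+1)).inf' Finset.nonempty_range_add_one (fun j => P n κ (i + j))
      = min (F n κ i) (P n κ (i + (n+1))) := by
  apply le_antisymm
  · apply le_min
    · apply Finset.le_inf'
      intro j hj
      exact Finset.inf'_le _ (Finset.mem_range.mpr (by have := Finset.mem_range.mp hj; omega))
    · exact Finset.inf'_le _ (Finset.mem_range.mpr (by omega))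
  · apply Finset.le_inf'
    intro j hj
    have hj' := Finset.mem_range.mp hj
    rcases Nat.lt_or_ge j (n+1) with h | h
    · exact (min_le_left _ _).trans (Finset.inf'_le _ (Finset.mem_range.mpr h))
    · have : j = n+1 := by omega
      subst this
      exact min_le_right _ _

lemma G_min' (n : ℕ) (κ : Fin (n+1) → ℝ) (i : ℕ) :
    (Finset.range (n+1+1)).inf' Finset.nonempty_range_add_one (fun j => P n κ (i + j))
      = min (P n κ i) (F n κ (i+1)) := by
  apply le_antisymm
  · apply le_min
    · have := Finset.inf'_le (s := Finset.range (n+1+1))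
        (fun j => P n κ (i + j)) (Finset.mem_range.mpr (by omega : 0 < n+1+1))
      exact this
    · apply Finset.le_inf'
      intro j hj
      have hj' := Finset.mem_range.mp hj
      have := Finset.inf'_le (s := Finset.range (n+1+1))
        (fun j => P n κ (i + j)) (Finset.mem_range.mpr (by omega : j + 1 < n+1+1))
      simp only [show i + (j+1) = i + 1 + j by omega] at this ⊢; exact this
  · apply Finset.le_inf'
    intro j hj
    have hj' := Finset.mem_range.mp hj
    rcases j with _ | j
    · simp only [Nat.add_zero]; exact min_le_left (P n κ i) (F n κ (i+1))
    · have : F n κ (i+1) ≤ P n κ (i + (j+1)) := by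
        have := F_le n κ (i+1) j (by omega)
        simpa [show i + 1 + j = i + (j+1) by omega] using this
      exact (min_le_right _ _).trans this

end HuntDyson

open HuntDyson

/-- The Hunt–Dyson formula summed over the cyclic subgroup `C_m` generated by
the cyclic permutation `(1 2 ⋯ m)` (which is `finRotate m`). -/
theorem hunt_dyson_cyclic (m : ℕ) (hm : 1 ≤ m) (κ : Fin m → ℝ) :
    ∑ i ∈ Finset.range m,
      (partialMin m (fun t => κ (((finRotate m) ^ i) t)) m
        - partialMin m (fun t => κ (((finRotate m) ^ i) t)) (m - 1))
    = min 0 (∑ t : Fin m, κ t) := by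
  obtain ⟨n, rfl⟩ : ∃ n, m = n + 1 := ⟨m - 1, (Nat.succ_pred_eq_of_pos hm).symm⟩
  rw [← P_full n κ]
  simp only [Nat.add_sub_cancel]
  have hkey1 : ∀ i, partialMin (n+1) (fun t => κ (((finRotate (n+1)) ^ i) t)) (n+1)
      = (Finset.range (n+1+1)).inf' Finset.nonempty_range_add_one
          (fun j => P n κ (i + j)) - P n κ i :=
    fun i => key n κ i (n+1) le_rfl
  have hkey0 : ∀ i, partialMin (n+1) (fun t => κ (((finRotate (n+1)) ^ i) t)) n
      = F n κ i - P n κ i :=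
    fun i => key n κ i n (by omega)
  rcases le_total 0 (P n κ (n+1)) with hpos | hneg
  · rw [min_eq_left hpos]
    apply Finset.sum_eq_zero
    intro i _
    rw [hkey1 i, hkey0 i, G_min]
    have h1 : F n κ i ≤ P n κ i := by simpa using F_le n κ i 0 (by omega)
    have h2 : P n κ i ≤ P n κ (i + (n+1)) := by rw [P_period]; linarith
    rw [min_eq_left (h1.trans h2)]
    ring
  · rw [min_eq_right hneg]
    have step : ∀ i ∈ Finset.range (n+1),
        (partialMin (n+1) (fun t => κ (((finRotate (n+1)) ^ i) t)) (n+1)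
          - partialMin (n+1) (fun t => κ (((finRotate (n+1)) ^ i) t)) n)
        = F n κ (i+1) - F n κ i := by
      intro i _
      rw [hkey1 i, hkey0 i, G_min']
      have hF : F n κ (i+1) ≤ P n κ i := by
        have h1 : F n κ (i+1) ≤ P n κ (i+1+n) := F_le n κ (i+1) n le_rfl
        have h2 : P n κ (i+1+n) = P n κ i + P n κ (n+1) := by
          rw [show i+1+n = i+(n+1) by omega, P_period]
        linarith
      rw [min_eq_right hF]
      ring
    rw [Finset.sum_congr rfl step, Finset.sum_range_sub (fun i => F n κ i)]
    have hFtop : F n κ (n+1) = F n κ 0 + P n κ (n+1) := by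
      rw [F, F, ← inf'_add_const Finset.nonempty_range_add_one
        (fun j => P n κ (0 + j)) (P n κ (n+1))]
      apply Finset.inf'_congr _ rfl
      intro j _
      rw [show (n+1) + j = j + (n+1) by omega, P_period, Nat.zero_add]
    rw [hFtop]
    ring
end

section
/- Maximum version of the Hunt–Dyson formula: For every m ∈ ℕ (m ≥ 1) and all real numbers κ_1, …, κ_m, one has ∑_{τ ∈ S_m} [ P_m(κ_τ) − P_{m−1}(κ_τ) ] = (m−1)! · max(0, κ_1 + ⋯ + κ_m). -/
open Finset

/-- `partialMax m κ p` is `max(0, κ₁, κ₁+κ₂, …, κ₁+⋯+κ_p)`,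
the maximum of `0` and the first `p` partial sums of `κ`. -/
noncomputable def partialMax (m : ℕ) (κ : Fin m → ℝ) (p : ℕ) : ℝ :=
  (Finset.range (p + 1)).sup' Finset.nonempty_range_add_one
    (fun i => ∑ t : Fin m, if (t : ℕ) < i then κ t else 0)

open Fin.NatCast Fin.CommRing

private lemma sup'_sub_const {α : Type*} (s : Finset α) (h : s.Nonempty) (f : α → ℝ) (c : ℝ) :
    s.sup' h (fun x => f x - c) = s.sup' h f - c := by
  apply le_antisymm
  · exact Finset.sup'_le _ _ fun x hx => sub_le_sub_right (Finset.le_sup' f hx) c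
  · rw [sub_le_iff_le_add]
    exact Finset.sup'_le _ _ fun x hx => by
      have := Finset.le_sup' (fun y => f y - c) hx
      linarith

private lemma hd_cycle_s4 (n : ℕ) (b : Fin (n + 1) → ℝ) (hS : 0 < ∑ i, b i) :
    ∑ r ∈ Finset.range (n + 1),
      (partialMax (n + 1) (fun i => b (i + (r : Fin (n + 1)))) (n + 1)
        - partialMax (n + 1) (fun i => b (i + (r : Fin (n + 1)))) n)
      = ∑ i, b i := by
  set S := ∑ i, b i with hSdef
  set s : ℕ → ℝ := fun k => ∑ i ∈ Finset.range k, b ((i : Fin (n + 1))) with hs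
  have key0 : ∀ k p : ℕ, s (k + p) = s k + ∑ i ∈ Finset.range p, b (((k + i : ℕ) : Fin (n + 1))) := by
    intro k p
    simpa [hs] using Finset.sum_range_add (fun i => b ((i : Fin (n + 1)))) k p
  have hper : ∀ k, s (k + (n + 1)) = s k + S := by
    intro k
    rw [key0 k (n + 1)]
    congr 1
    rw [hSdef, ← Fin.sum_univ_eq_sum_range (fun i => b (((k + i : ℕ) : Fin (n + 1)))) (n + 1)]
    apply Fintype.sum_equiv (Equiv.addLeft ((k : ℕ) : Fin (n + 1)))
    intro i
    congr 1
    simp [Equiv.addLeft, Nat.cast_add, Fin.cast_val_eq_self]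
  -- partial sums of the rotated sequence
  have hps : ∀ (r p : ℕ), p ≤ n + 1 →
      (∑ t : Fin (n + 1), if (t : ℕ) < p then b (t + (r : Fin (n + 1))) else 0)
        = s (r + p) - s r := by
    intro r p hp
    have A : (∑ t : Fin (n + 1), if (t : ℕ) < p then b (t + (r : Fin (n + 1))) else 0)
        = ∑ i ∈ Finset.range (n + 1),
            (if i < p then b ((i : Fin (n + 1)) + (r : Fin (n + 1))) else 0) := by
      rw [← Fin.sum_univ_eq_sum_range
        (fun i => if i < p then b ((i : Fin (n + 1)) + (r : Fin (n + 1))) else 0) (n + 1)]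
      exact Finset.sum_congr rfl fun t _ => by rw [Fin.cast_val_eq_self]
    have B : (∑ i ∈ Finset.range (n + 1),
            (if i < p then b ((i : Fin (n + 1)) + (r : Fin (n + 1))) else 0))
        = ∑ i ∈ Finset.range p, b ((i : Fin (n + 1)) + (r : Fin (n + 1))) := by
      rw [← Finset.sum_subset (Finset.range_subset_range.mpr hp)
        (fun x _ hx => if_neg (fun h => hx (Finset.mem_range.mpr h)))]
      exact Finset.sum_congr rfl fun i hi => if_pos (Finset.mem_range.mp hi)
    have C : (∑ i ∈ Finset.range p, b ((i : Fin (n + 1)) + (r : Fin (n + 1))))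
        = s (r + p) - s r := by
      have h1 := key0 r p
      have h2 : ∀ i : ℕ, ((r + i : ℕ) : Fin (n + 1)) = (i : Fin (n + 1)) + (r : Fin (n + 1)) := by
        intro i; push_cast; ring
      simp only [h2] at h1
      linarith
    rw [A, B, C]
  -- partialMax of the rotated sequence
  have hpm : ∀ (r p : ℕ), p ≤ n + 1 →
      partialMax (n + 1) (fun i => b (i + (r : Fin (n + 1)))) p
        = (Finset.range (p + 1)).sup' Finset.nonempty_range_add_one (fun j => s (r + j)) - s r := by
    intro r p hp
    unfold partialMax
    rw [← sup'_sub_const]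
    apply Finset.sup'_congr _ rfl
    intro i hi
    rw [Finset.mem_range] at hi
    exact hps r i (by omega)
  -- window maxima
  set G : ℕ → ℝ := fun r =>
    (Finset.range (n + 1)).sup' Finset.nonempty_range_add_one (fun j => s (r + j)) with hG
  have hkey : ∀ r : ℕ,
      (Finset.range (n + 1 + 1)).sup' Finset.nonempty_range_add_one (fun j => s (r + j))
        = G (r + 1) := by
    intro r
    simp only [hG]
    apply le_antisymm
    · apply Finset.sup'_le
      intro j hj
      rw [Finset.mem_range] at hj
      rcases Nat.eq_zero_or_pos j with h0 | h0
      · subst h0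
        have h1 : s ((r + 1) + n) ≤ (Finset.range (n + 1)).sup' Finset.nonempty_range_add_one
            (fun j => s ((r + 1) + j)) :=
          Finset.le_sup' (fun j => s ((r + 1) + j)) (Finset.mem_range.mpr (by omega))
        have h2 := hper r
        have h3 : r + (n + 1) = (r + 1) + n := by omega
        rw [h3] at h2
        simp only [Nat.add_zero]
        linarith
      · have h3 : r + j = (r + 1) + (j - 1) := by omega
        rw [h3]
        exact Finset.le_sup' (fun j => s ((r + 1) + j)) (Finset.mem_range.mpr (by omega))
    · apply Finset.sup'_le
      intro j hj
      rw [Finset.mem_range] at hj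
      have h3 : (r + 1) + j = r + (j + 1) := by omega
      rw [h3]
      exact Finset.le_sup' (fun j => s (r + j)) (Finset.mem_range.mpr (by omega))
  have hterm : ∀ r : ℕ,
      partialMax (n + 1) (fun i => b (i + (r : Fin (n + 1)))) (n + 1)
        - partialMax (n + 1) (fun i => b (i + (r : Fin (n + 1)))) n
        = G (r + 1) - G r := by
    intro r
    rw [hpm r (n + 1) le_rfl, hpm r n (by omega), hkey r]
    simp only [hG]
    ring
  calc ∑ r ∈ Finset.range (n + 1),
        (partialMax (n + 1) (fun i => b (i + (r : Fin (n + 1)))) (n + 1)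
          - partialMax (n + 1) (fun i => b (i + (r : Fin (n + 1)))) n)
      = ∑ r ∈ Finset.range (n + 1), (G (r + 1) - G r) :=
        Finset.sum_congr rfl fun r _ => hterm r
    _ = G (n + 1) - G 0 := Finset.sum_range_sub G (n + 1)
    _ = S := by
        have h2 : ∀ j ∈ Finset.range (n + 1), s ((n + 1) + j) = s (0 + j) + S := by
          intro j _
          rw [Nat.add_comm (n + 1) j, Nat.zero_add]
          exact hper j
        have h3 := sup'_sub_const (Finset.range (n + 1)) Finset.nonempty_range_add_one
          (fun j => s (0 + j)) (-S)
        simp only [sub_neg_eq_add] at h3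
        have h4 := Finset.sup'_congr Finset.nonempty_range_add_one rfl h2
        simp only [hG]
        rw [h4, h3]
        ring

/-- The maximum version of the Hunt–Dyson formula. -/
theorem hunt_dyson_max (m : ℕ) (hm : 1 ≤ m) (κ : Fin m → ℝ) :
    ∑ τ : Equiv.Perm (Fin m),
      (partialMax m (fun i => κ (τ i)) m - partialMax m (fun i => κ (τ i)) (m - 1))
    = ((m - 1).factorial : ℝ) * max 0 (∑ i : Fin m, κ i) := by
  obtain ⟨n, rfl⟩ : ∃ n, m = n + 1 := ⟨m - 1, by omega⟩
  simp only [Nat.add_sub_cancel]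
  set S := ∑ i : Fin (n + 1), κ i with hSdef
  have hperm_sum : ∀ τ : Equiv.Perm (Fin (n + 1)), ∑ i, κ (τ i) = S :=
    fun τ => Equiv.sum_comp τ κ
  rcases le_or_gt S 0 with hS | hS
  · rw [max_eq_left hS, mul_zero]
    apply Finset.sum_eq_zero
    intro τ _
    have hfull : (∑ t : Fin (n + 1), if (t : ℕ) < n + 1 then κ (τ t) else 0) = S := by
      rw [← hperm_sum τ]
      exact Finset.sum_congr rfl fun t _ => if_pos t.isLt
    have h0 : (∑ t : Fin (n + 1), if (t : ℕ) < 0 then κ (τ t) else 0) = 0 := by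
      simp
    have : partialMax (n + 1) (fun i => κ (τ i)) (n + 1)
        = partialMax (n + 1) (fun i => κ (τ i)) n := by
      unfold partialMax
      set f : ℕ → ℝ := fun i => ∑ t : Fin (n + 1), if (t : ℕ) < i then κ (τ t) else 0 with hf
      apply le_antisymm
      · apply Finset.sup'_le
        intro i hi
        rw [Finset.mem_range] at hi
        rcases Nat.lt_or_ge i (n + 1) with h | h
        · exact Finset.le_sup' f (Finset.mem_range.mpr h)
        · have hi' : i = n + 1 := by omega
          subst hi'
          calc f (n + 1) = S := hfull
            _ ≤ 0 := hS
            _ = f 0 := h0.symm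
            _ ≤ _ := Finset.le_sup' f (Finset.mem_range.mpr (by omega))
      · apply Finset.sup'_le
        intro i hi
        rw [Finset.mem_range] at hi
        exact Finset.le_sup' f (Finset.mem_range.mpr (by omega))
    rw [this, sub_self]
  · rw [max_eq_right hS.le]
    have key : ∀ τ : Equiv.Perm (Fin (n + 1)),
        ∑ r ∈ Finset.range (n + 1),
          (partialMax (n + 1) (fun i => κ ((τ * Equiv.addRight ((r : Fin (n + 1)))) i)) (n + 1)
            - partialMax (n + 1) (fun i => κ ((τ * Equiv.addRight ((r : Fin (n + 1)))) i)) n)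
        = S := by
      intro τ
      have hb : 0 < ∑ i, κ (τ i) := by rw [hperm_sum τ]; exact hS
      have := hd_cycle_s4 n (fun j => κ (τ j)) hb
      rw [hperm_sum τ] at this
      simpa only [Equiv.Perm.mul_apply, Equiv.coe_addRight] using this
    set F : Equiv.Perm (Fin (n + 1)) → ℝ := fun σ =>
      partialMax (n + 1) (fun i => κ (σ i)) (n + 1)
        - partialMax (n + 1) (fun i => κ (σ i)) n with hF
    have hswap : ∑ τ : Equiv.Perm (Fin (n + 1)), ∑ r ∈ Finset.range (n + 1),
        F (τ * Equiv.addRight ((r : Fin (n + 1))))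
        = ∑ r ∈ Finset.range (n + 1), ∑ τ : Equiv.Perm (Fin (n + 1)),
            F (τ * Equiv.addRight ((r : Fin (n + 1)))) := Finset.sum_comm
    have h1 : ∀ r : ℕ, ∑ τ : Equiv.Perm (Fin (n + 1)),
        F (τ * Equiv.addRight ((r : Fin (n + 1)))) = ∑ σ, F σ :=
      fun r => Equiv.sum_comp (Equiv.mulRight (Equiv.addRight ((r : Fin (n + 1))))) F
    have h2 : ∑ τ : Equiv.Perm (Fin (n + 1)), ∑ r ∈ Finset.range (n + 1),
        F (τ * Equiv.addRight ((r : Fin (n + 1)))) = ((n + 1).factorial : ℝ) * S := by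
      rw [Finset.sum_congr rfl fun τ _ => key τ, Finset.sum_const, nsmul_eq_mul]
      congr 1
      rw [Finset.card_univ, Fintype.card_perm, Fintype.card_fin]
    have h3 : ((n + 1 : ℕ) : ℝ) * ∑ σ, F σ = ((n + 1).factorial : ℝ) * S := by
      rw [← h2, hswap, Finset.sum_congr rfl fun r _ => h1 r, Finset.sum_const,
        Finset.card_range, nsmul_eq_mul]
    have h4 : ((n + 1).factorial : ℝ) = ((n + 1 : ℕ) : ℝ) * (n.factorial : ℝ) := by
      rw [Nat.factorial_succ]; push_cast; ring
    rw [h4, mul_assoc] at h3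
    exact mul_left_cancel₀ (by positivity) h3
end

section
/- Two-block splitting identity for the minimum of partial sums: Let p ∈ ℕ, p ≥ 3, let μ_1, …, μ_p ∈ ℤ, and let 1 ≤ j ≤ p−2. Then M_p(μ_1, …, μ_p) = M_j(μ_1, …, μ_j) − ( μ_1 + ⋯ + μ_j − M_j(μ_1, …, μ_j) + μ_{j+1} + M_{p−j−1}(μ_{j+2}, …, μ_p) )_−. -/
open Finset

/-- `Mz p μ` is `M_p(μ₁, …, μ_p) = min(0, μ₁, μ₁+μ₂, …, μ₁+⋯+μ_p)`,
the minimum of `0` and all partial sums of the first `p` values of `μ`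
(here `μ i` plays the role of `μ_{i+1}`). -/
def Mz (p : ℕ) (μ : ℕ → ℤ) : ℤ :=
  (Finset.range (p + 1)).inf' Finset.nonempty_range_add_one
    (fun i => ∑ t ∈ Finset.range i, μ t)

/-- Two-block splitting identity for the minimum of partial sums:
`M_p(μ) = M_j(μ₁,…,μ_j)
  − (μ₁+⋯+μ_j − M_j(μ₁,…,μ_j) + μ_{j+1} + M_{p−j−1}(μ_{j+2},…,μ_p))₋`,
where `(x)₋ = max(0, −x)`. -/
theorem two_block_splitting (p : ℕ) (hp : 3 ≤ p) (μ : ℕ → ℤ)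
    (j : ℕ) (hj1 : 1 ≤ j) (hj2 : j ≤ p - 2) :
    Mz p μ
      = Mz j μ -
        max 0 (-((∑ t ∈ Finset.range j, μ t) - Mz j μ + μ j
            + Mz (p - j - 1) (fun t => μ (j + 1 + t)))) := by
  have hjp : j + 2 ≤ p := by omega
  have hsum : ∀ k, ∑ t ∈ Finset.range (j + 1 + k), μ t
      = (∑ t ∈ Finset.range j, μ t) + μ j + ∑ t ∈ Finset.range k, μ (j + 1 + t) := by
    intro k
    rw [Finset.sum_range_add, Finset.sum_range_succ]
  have key : Mz p μ = min (Mz j μ)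
      ((∑ t ∈ Finset.range j, μ t) + μ j + Mz (p - j - 1) (fun t => μ (j + 1 + t))) := by
    apply le_antisymm
    · apply le_min
      · apply Finset.le_inf'
        intro i hi
        exact Finset.inf'_le _ (Finset.mem_range.2 (by
          have := Finset.mem_range.1 hi; omega))
      · have h2 : Mz p μ - ((∑ t ∈ Finset.range j, μ t) + μ j)
            ≤ Mz (p - j - 1) (fun t => μ (j + 1 + t)) := by
          apply Finset.le_inf'
          intro k hk
          have hk' := Finset.mem_range.1 hk
          have hle : Mz p μ ≤ ∑ t ∈ Finset.range (j + 1 + k), μ t :=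
            Finset.inf'_le _ (Finset.mem_range.2 (by omega))
          rw [hsum k] at hle
          simp only []
          linarith
        linarith
    · apply Finset.le_inf'
      intro i hi
      have hi' := Finset.mem_range.1 hi
      rcases le_or_gt i j with h | h
      · refine le_trans (min_le_left _ _) ?_
        exact Finset.inf'_le _ (Finset.mem_range.2 (by omega))
      · refine le_trans (min_le_right _ _) ?_
        have hM : Mz (p - j - 1) (fun t => μ (j + 1 + t))
            ≤ ∑ t ∈ Finset.range (i - j - 1), μ (j + 1 + t) :=
          Finset.inf'_le _ (Finset.mem_range.2 (by omega))
        have : i = j + 1 + (i - j - 1) := by omega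
        rw [this, hsum]
        linarith
  rw [key]
  rcases le_total (Mz j μ)
      ((∑ t ∈ Finset.range j, μ t) + μ j + Mz (p - j - 1) (fun t => μ (j + 1 + t))) with h | h
  · rw [min_eq_left h, max_eq_left (by linarith)]; ring
  · rw [min_eq_right h, max_eq_right (by linarith)]; ring
end

section
/- Three-factor merging identity for the maps Φ_j: Fix p ∈ ℕ and complex numbers x_1, …, x_{p−2}, y_1, …, y_{p−2}, z_1, …, z_{p−2}. Then ∑_{(a,b,c): a,b,c ≥ 1, a+b+c = p} ∑_{α=1}^{a} ∑_{β=1}^{b} ∑_{γ=1}^{c} (1/(α! β! γ!)) · Φ_α[z^a](x_1,…,x_α) · Φ_β[z^b](y_1,…,y_β) · Φ_γ[z^c](z_1,…,z_γ) = ∑_{α ≥ 1} ∑_{β ≥ 1} ∑_{γ ≥ 1} (1/(α! β! γ!)) · Φ_{α+β+γ}[z^p](x_1,…,x_α, y_1,…,y_β, z_1,…,z_γ), where the sums on the right-hand side terminate because Φ_{α+β+γ}[z^p] = 0 whenever α+β+γ > p. -/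
open Finset

/-- Compositions of `m` into `j` positive parts. -/
def compositions (j m : ℕ) : Finset (Fin j → ℕ) :=
  (Finset.Nat.antidiagonalTuple j m).filter fun k => ∀ i, 1 ≤ k i

/-- `Phi j m x = Φ_j[z^m](x₁, …, x_j) = ∑_{l₁+⋯+l_j = m, lᵢ ≥ 1} ∏ᵢ xᵢ^{lᵢ}/lᵢ`,
with `Φ_j[z^m] = 0` when `m < j` (the sum over compositions is then empty). -/
noncomputable def Phi (j m : ℕ) (x : ℕ → ℂ) : ℂ :=
  ∑ l ∈ compositions j m, ∏ i : Fin j, x (i : ℕ) ^ (l i) / (l i : ℂ)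

lemma mem_compositions {j m : ℕ} {l : Fin j → ℕ} :
    l ∈ compositions j m ↔ (∑ i, l i = m) ∧ ∀ i, 1 ≤ l i := by
  simp [compositions, Finset.Nat.mem_antidiagonalTuple]

lemma compositions_empty {j m : ℕ} (h : m < j) : compositions j m = ∅ := by
  ext l
  simp only [mem_compositions, Finset.notMem_empty, iff_false, not_and]
  intro hs hl
  have : (j : ℕ) ≤ ∑ i : Fin j, l i := by
    calc (j:ℕ) = ∑ _i : Fin j, 1 := by simp
    _ ≤ ∑ i, l i := Finset.sum_le_sum fun i _ => hl i
  omega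

lemma Phi_zero {j m : ℕ} (h : m < j) (x : ℕ → ℂ) : Phi j m x = 0 := by
  simp [Phi, compositions_empty h]

lemma Phi_merge (j k m : ℕ) (x y : ℕ → ℂ) :
    Phi (j + k) m (fun i => if i < j then x i else y (i - j)) =
      ∑ s ∈ Finset.HasAntidiagonal.antidiagonal m, Phi j s.1 x * Phi k s.2 y := by
  classical
  have hRHS : ∑ s ∈ Finset.HasAntidiagonal.antidiagonal m, Phi j s.1 x * Phi k s.2 y
      = ∑ q ∈ (Finset.HasAntidiagonal.antidiagonal m).sigma
          (fun s => (compositions j s.1) ×ˢ (compositions k s.2)),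
          (∏ i : Fin j, x (i:ℕ) ^ (q.2.1 i) / (q.2.1 i : ℂ)) *
          (∏ i : Fin k, y (i:ℕ) ^ (q.2.2 i) / (q.2.2 i : ℂ)) := by
    rw [Finset.sum_sigma]
    refine Finset.sum_congr rfl fun s _ => ?_
    rw [Finset.sum_product]
    simp [Phi, Finset.sum_mul_sum]
  rw [hRHS, Phi]
  refine Finset.sum_nbij'
    (i := fun l => ⟨(∑ i : Fin j, l (Fin.castAdd k i), ∑ i : Fin k, l (Fin.natAdd j i)),
      (fun i => l (Fin.castAdd k i), fun i => l (Fin.natAdd j i))⟩)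
    (j := fun q => Fin.append q.2.1 q.2.2) ?_ ?_ ?_ ?_ ?_
  · intro l hl
    rw [mem_compositions] at hl
    have hsum : ∑ i : Fin j, l (Fin.castAdd k i) + ∑ i : Fin k, l (Fin.natAdd j i) = m := by
      rw [← hl.1, Fin.sum_univ_add]
    exact Finset.mem_sigma.2 ⟨Finset.HasAntidiagonal.mem_antidiagonal.2 hsum, Finset.mem_product.2
      ⟨mem_compositions.2 ⟨rfl, fun i => hl.2 _⟩, mem_compositions.2 ⟨rfl, fun i => hl.2 _⟩⟩⟩
  · intro q hq
    simp only [Finset.mem_sigma, Finset.HasAntidiagonal.mem_antidiagonal, Finset.mem_product,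
      mem_compositions] at hq
    rw [mem_compositions]
    constructor
    · rw [Fin.sum_univ_add]
      simp only [Fin.append_left, Fin.append_right]
      rw [hq.2.1.1, hq.2.2.1]
      exact hq.1
    · intro i
      refine Fin.addCases (fun i => ?_) (fun i => ?_) i
      · simpa using hq.2.1.2 i
      · simpa using hq.2.2.2 i
  · intro l _
    funext i
    refine Fin.addCases (fun i => ?_) (fun i => ?_) i <;>
      simp [Fin.append_left, Fin.append_right]
  · intro q hq
    simp only [Finset.mem_sigma, Finset.mem_antidiagonal, Finset.mem_product,
      mem_compositions] at hq
    obtain ⟨hab, ⟨hu, _⟩, ⟨hv, _⟩⟩ := hq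
    have h1 : (fun i => Fin.append q.2.1 q.2.2 (Fin.castAdd k i)) = q.2.1 := by
      funext i; simp [Fin.append_left]
    have h2 : (fun i => Fin.append q.2.1 q.2.2 (Fin.natAdd j i)) = q.2.2 := by
      funext i; simp [Fin.append_right]
    ext <;> simp [h1, h2, hu, hv]
  · intro l _
    rw [Fin.prod_univ_add]
    congr 1
    · refine Finset.prod_congr rfl fun i _ => ?_
      simp [Fin.is_lt]
    · refine Finset.prod_congr rfl fun i _ => ?_
      simp

lemma triangle (p : ℕ) (g : ℕ → ℕ → ℂ) :
    ∑ s ∈ Finset.range (p+1), ∑ a ∈ Finset.range (s+1), g s a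
    = ∑ a ∈ Finset.range (p+1), ∑ b ∈ Finset.range (p+1-a), g (a+b) a := by
  simp_rw [Finset.range_eq_Ico]
  rw [← Finset.sum_Ico_Ico_comm 0 (p+1) (fun a s => g s a)]
  refine Finset.sum_congr rfl fun a _ => ?_
  rw [Finset.sum_Ico_eq_sum_range, Finset.range_eq_Ico]

lemma collapse (p t : ℕ) (F : ℕ → ℂ) :
    ∑ c ∈ Finset.range (p+1), (if t + c = p then F c else 0)
    = if t ≤ p then F (p - t) else 0 := by
  rcases le_or_gt t p with h | h
  · rw [if_pos h]
    have : ∀ c ∈ Finset.range (p+1), (if t + c = p then F c else 0)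
        = if c = p - t then F c else 0 := by
      intro c _
      exact if_congr (by omega) rfl rfl
    rw [Finset.sum_congr rfl this, Finset.sum_ite_eq']
    simp [Nat.lt_succ_iff, h]
  · rw [if_neg (by omega)]
    exact Finset.sum_eq_zero fun c _ => if_neg (by omega)

lemma truncate (p a : ℕ) (G : ℕ → ℂ) :
    ∑ b ∈ Finset.range (p+1), (if a + b ≤ p then G b else 0)
    = ∑ b ∈ Finset.range (p+1-a), G b := by
  rw [Finset.sum_ite, Finset.sum_const_zero, add_zero]
  apply Finset.sum_congr _ fun _ _ => rfl
  ext b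
  simp only [Finset.mem_filter, Finset.mem_range]
  omega

lemma range_succ_eq (p : ℕ) : Finset.range (p+1) = insert 0 (Finset.Icc 1 p) := by
  ext i
  simp only [Finset.mem_range, Finset.mem_insert, Finset.mem_Icc]
  omega

lemma ite_sum {P : Prop} [Decidable P] {s : Finset ℕ} (f : ℕ → ℂ) :
    (if P then ∑ x ∈ s, f x else 0) = ∑ x ∈ s, (if P then f x else 0) := by
  split <;> simp

lemma sum_comm6 (s : Finset ℕ) (f : ℕ → ℕ → ℕ → ℕ → ℕ → ℕ → ℂ) :
    (∑ a ∈ s, ∑ b ∈ s, ∑ c ∈ s, ∑ d ∈ s, ∑ e ∈ s, ∑ g ∈ s, f a b c d e g)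
  = ∑ d ∈ s, ∑ e ∈ s, ∑ g ∈ s, ∑ a ∈ s, ∑ b ∈ s, ∑ c ∈ s, f a b c d e g := by
  have := Finset.sum_comm (s := s ×ˢ s ×ˢ s) (t := s ×ˢ s ×ˢ s)
    (f := fun u v => f u.1 u.2.1 u.2.2 v.1 v.2.1 v.2.2)
  simpa [Finset.sum_product] using this

lemma Phi_merge3 (α β γ p : ℕ) (x y z : ℕ → ℂ) :
    Phi (α + β + γ) p
      (fun i => if i < α then x i else if i < α + β then y (i - α) else z (i - α - β)) =
    ∑ s ∈ Finset.range (p+1), ∑ a ∈ Finset.range (s+1),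
      Phi α a x * Phi β (s-a) y * Phi γ (p-s) z := by
  have hfn : (fun i => if i < α then x i else if i < α + β then y (i - α) else z (i - α - β))
      = fun i => if i < α + β then (if i < α then x i else y (i - α)) else z (i - (α + β)) := by
    funext i
    rcases lt_or_ge i α with h | h
    · simp [h, lt_of_lt_of_le h (Nat.le_add_right _ _)]
    · rcases lt_or_ge i (α + β) with h2 | h2 <;>
        simp [h2, Nat.not_lt.2 h, Nat.sub_sub]
  rw [hfn]
  rw [Phi_merge (α + β) γ p (fun i => if i < α then x i else y (i - α)) z,
    Finset.Nat.sum_antidiagonal_eq_sum_range_succ_mk]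
  refine Finset.sum_congr rfl fun s _ => ?_
  rw [Phi_merge α β s x y, Finset.Nat.sum_antidiagonal_eq_sum_range_succ_mk, Finset.sum_mul]

lemma Phi_key (α β γ p : ℕ) (hα : 1 ≤ α) (hβ : 1 ≤ β) (hγ : 1 ≤ γ) (x y z : ℕ → ℂ) :
    ∑ a ∈ Finset.Icc 1 p, ∑ b ∈ Finset.Icc 1 p, ∑ c ∈ Finset.Icc 1 p,
      (if a + b + c = p then Phi α a x * Phi β b y * Phi γ c z else 0)
    = Phi (α + β + γ) p
      (fun i => if i < α then x i else if i < α + β then y (i - α) else z (i - α - β)) := by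
  rw [Phi_merge3, triangle]
  have h0a : ∀ m (w : ℕ → ℂ), 1 ≤ m → Phi m 0 w = 0 := fun m w hm => Phi_zero hm w
  -- extend the Icc sums to range sums
  have hc : ∀ a b, ∑ c ∈ Finset.Icc 1 p, (if a + b + c = p then
        Phi α a x * Phi β b y * Phi γ c z else 0)
      = ∑ c ∈ Finset.range (p+1), (if a + b + c = p then
        Phi α a x * Phi β b y * Phi γ c z else 0) := by
    intro a b
    rw [range_succ_eq, Finset.sum_insert (by simp)]
    simp [h0a γ z hγ]
  have hb : ∀ a, ∑ b ∈ Finset.Icc 1 p, ∑ c ∈ Finset.range (p+1), (if a + b + c = p then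
        Phi α a x * Phi β b y * Phi γ c z else 0)
      = ∑ b ∈ Finset.range (p+1), ∑ c ∈ Finset.range (p+1), (if a + b + c = p then
        Phi α a x * Phi β b y * Phi γ c z else 0) := by
    intro a
    rw [range_succ_eq, Finset.sum_insert (by simp)]
    simp [h0a β y hβ]
  have ha : ∑ a ∈ Finset.Icc 1 p, ∑ b ∈ Finset.range (p+1), ∑ c ∈ Finset.range (p+1),
        (if a + b + c = p then Phi α a x * Phi β b y * Phi γ c z else 0)
      = ∑ a ∈ Finset.range (p+1), ∑ b ∈ Finset.range (p+1), ∑ c ∈ Finset.range (p+1),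
        (if a + b + c = p then Phi α a x * Phi β b y * Phi γ c z else 0) := by
    rw [range_succ_eq, Finset.sum_insert (by simp)]
    simp [h0a α x hα]
  simp_rw [hc, hb]
  rw [ha]
  -- collapse the c sum, then truncate the b sum
  have : ∀ a ∈ Finset.range (p+1), ∀ b ∈ Finset.range (p+1),
      (∑ c ∈ Finset.range (p+1), (if a + b + c = p then
        Phi α a x * Phi β b y * Phi γ c z else 0))
      = if a + b ≤ p then Phi α a x * Phi β b y * Phi γ (p - (a+b)) z else 0 := by
    intro a _ b _
    exact collapse p (a+b) (fun c => Phi α a x * Phi β b y * Phi γ c z)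
  rw [Finset.sum_congr rfl fun a hax => Finset.sum_congr rfl fun b hbx => this a hax b hbx]
  refine Finset.sum_congr rfl fun a _ => ?_
  rw [truncate p a (fun b => Phi α a x * Phi β b y * Phi γ (p - (a+b)) z)]
  refine Finset.sum_congr rfl fun b _ => ?_
  rw [Nat.add_sub_cancel_left]

/-- Three-factor merging identity for the maps `Φ_j`.  On the right-hand side the
sums over `α, β, γ ≥ 1` terminate (terms with `α+β+γ > p` vanish since
`Φ_{α+β+γ}[z^p] = 0`), so they are written as the equal finite sums up to `p`. -/
theorem phi_three_merge (p : ℕ) (x y z : ℕ → ℂ) :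
    ∑ a ∈ Finset.Icc 1 p, ∑ b ∈ Finset.Icc 1 p, ∑ c ∈ Finset.Icc 1 p,
      (if a + b + c = p then
        ∑ α ∈ Finset.Icc 1 a, ∑ β ∈ Finset.Icc 1 b, ∑ γ ∈ Finset.Icc 1 c,
          (1 / ((α.factorial : ℂ) * (β.factorial : ℂ) * (γ.factorial : ℂ))) *
            (Phi α a x * Phi β b y * Phi γ c z)
      else 0)
    = ∑ α ∈ Finset.Icc 1 p, ∑ β ∈ Finset.Icc 1 p, ∑ γ ∈ Finset.Icc 1 p,
        (1 / ((α.factorial : ℂ) * (β.factorial : ℂ) * (γ.factorial : ℂ))) *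
          Phi (α + β + γ) p
            (fun i => if i < α then x i else if i < α + β then y (i - α) else z (i - α - β)) := by
  classical
  -- Step 1: replace the inner `Icc 1 a`, `Icc 1 b`, `Icc 1 c` by `Icc 1 p`
  have step1 : ∀ a ∈ Finset.Icc 1 p, ∀ b ∈ Finset.Icc 1 p, ∀ c ∈ Finset.Icc 1 p,
      (if a + b + c = p then
        ∑ α ∈ Finset.Icc 1 a, ∑ β ∈ Finset.Icc 1 b, ∑ γ ∈ Finset.Icc 1 c,
          (1 / ((α.factorial : ℂ) * (β.factorial : ℂ) * (γ.factorial : ℂ))) *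
            (Phi α a x * Phi β b y * Phi γ c z)
      else 0)
      = (if a + b + c = p then
        ∑ α ∈ Finset.Icc 1 p, ∑ β ∈ Finset.Icc 1 p, ∑ γ ∈ Finset.Icc 1 p,
          (1 / ((α.factorial : ℂ) * (β.factorial : ℂ) * (γ.factorial : ℂ))) *
            (Phi α a x * Phi β b y * Phi γ c z)
      else 0) := by
    intro a hax b hbx c hcx
    simp only [Finset.mem_Icc] at hax hbx hcx
    by_cases hp : a + b + c = p
    · rw [if_pos hp, if_pos hp]
      have hap : a ≤ p := by omega
      have hbp : b ≤ p := by omega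
      have hcp : c ≤ p := by omega
      rw [Finset.sum_subset (Finset.Icc_subset_Icc_right hap)]
      · refine Finset.sum_congr rfl fun α _ => ?_
        rw [Finset.sum_subset (Finset.Icc_subset_Icc_right hbp)]
        · refine Finset.sum_congr rfl fun β _ => ?_
          rw [Finset.sum_subset (Finset.Icc_subset_Icc_right hcp)]
          intro γ hγ1 hγ2
          simp only [Finset.mem_Icc] at hγ1 hγ2
          rw [Phi_zero (by omega) z]
          ring
        · intro β hβ1 hβ2
          simp only [Finset.mem_Icc] at hβ1 hβ2
          rw [Phi_zero (m := b) (by omega) y]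
          simp
      · intro α hα1 hα2
        simp only [Finset.mem_Icc] at hα1 hα2
        rw [Phi_zero (m := a) (by omega) x]
        simp
    · rw [if_neg hp, if_neg hp]
  rw [Finset.sum_congr rfl fun a hax => Finset.sum_congr rfl fun b hbx =>
    Finset.sum_congr rfl fun c hcx => step1 a hax b hbx c hcx]
  -- Step 2: push the `if` inside and swap the two blocks of sums
  simp_rw [ite_sum]
  rw [sum_comm6]
  -- Step 3: pull out the coefficient and apply the key identity
  refine Finset.sum_congr rfl fun α hαx => Finset.sum_congr rfl fun β hβx =>
    Finset.sum_congr rfl fun γ hγx => ?_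
  simp only [Finset.mem_Icc] at hαx hβx hγx
  rw [← Phi_key α β γ p hαx.1 hβx.1 hγx.1 x y z, Finset.mul_sum]
  refine Finset.sum_congr rfl fun a _ => ?_
  rw [Finset.mul_sum]
  refine Finset.sum_congr rfl fun b _ => ?_
  rw [Finset.mul_sum]
  refine Finset.sum_congr rfl fun c _ => ?_
  rw [mul_ite, mul_zero]
end

section
/- Integral formula for the 3-map W_3 on monomials: For every integer m ≥ 3 and all real numbers x_1, x_2, x_3 with x_3 ≠ 0, one has x_3 ∫_0^{x_1} ∫_0^{x_2} [ ξ_1^m/(ξ_1(ξ_1−x_3)(ξ_1−ξ_2)) − ξ_2^m/(ξ_2(ξ_2−x_3)(ξ_1−ξ_2)) + x_3^m/(x_3(ξ_1−x_3)(ξ_2−x_3)) ] dξ_2 dξ_1 = ∑_{(k_1,k_2,k_3): k_i ≥ 1, k_1+k_2+k_3 = m} (x_1^{k_1}/k_1) · (x_2^{k_2}/k_2) · x_3^{k_3}. Here the integrand is defined off the measure-zero set where ξ_1 = ξ_2, ξ_1 = x_3, ξ_2 = x_3, ξ_1 = 0, or ξ_2 = 0; on its complement it equals the polynomial h_{m−3}(ξ_1,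 ξ_2, x_3) = ∑_{p+q+r=m−3, p,q,r ≥ 0} ξ_1^p ξ_2^q x_3^r, which is locally integrable, so the integral is well defined. -/
open Finset intervalIntegral

/-- Compositions of `m` into `3` positive parts. -/
def compositions3 (m : ℕ) : Finset (Fin 3 → ℕ) :=
  (Finset.Nat.antidiagonalTuple 3 m).filter fun k => ∀ i, 1 ≤ k i


lemma geom2 (x y : ℝ) (h : x ≠ y) (n : ℕ) :
    ∑ i ∈ range (n+1), x^i * y^(n-i) = (x^(n+1) - y^(n+1))/(x-y) := by
  rw [eq_div_iff (sub_ne_zero.mpr h)]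
  have := geom_sum₂_mul x y (n+1)
  simpa using this

lemma triple (a b c : ℝ) (ha : a ≠ 0) (hb : b ≠ 0) (hc : c ≠ 0)
    (hab : a ≠ b) (hac : a ≠ c) (hbc : b ≠ c) (n : ℕ) :
    a^(n+3)/(a*(a-c)*(a-b)) - b^(n+3)/(b*(b-c)*(a-b)) + c^(n+3)/(c*(a-c)*(b-c))
      = ∑ p ∈ range (n+1), ∑ q ∈ range (n-p+1), a^p * c^(n-p-q) * b^q := by
  have inner : ∀ p ∈ range (n+1), ∑ q ∈ range (n-p+1), a^p * c^(n-p-q) * b^q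
      = a^p * ((b^(n-p+1) - c^(n-p+1))/(b-c)) := by
    intro p hp
    rw [← geom2 b c hbc (n-p), Finset.mul_sum]
    apply Finset.sum_congr rfl
    intro q hq; ring
  rw [Finset.sum_congr rfl inner]
  have key : ∀ p ∈ range (n+1), a^p * ((b^(n-p+1) - c^(n-p+1))/(b-c))
      = (a^p * b^(n-p) * b - a^p * c^(n-p) * c)/(b-c) := by
    intro p hp
    simp only [mem_range] at hp
    have hp' : p ≤ n := Nat.lt_succ_iff.mp hp
    rw [pow_succ b (n-p), pow_succ c (n-p)]
    ring
  rw [Finset.sum_congr rfl key, ← Finset.sum_div, Finset.sum_sub_distrib,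
    ← Finset.sum_mul, ← Finset.sum_mul, geom2 a b hab, geom2 a c hac]
  have h1 := sub_ne_zero.mpr hab
  have h2 := sub_ne_zero.mpr hac
  have h3 := sub_ne_zero.mpr hbc
  field_simp
  ring

lemma integ_poly (x2 : ℝ) (F : ℕ → ℕ → ℝ) (n : ℕ) (s : ℕ → ℕ) :
    ∫ t in (0:ℝ)..x2, ∑ p ∈ range (n+1), ∑ q ∈ range (s p), F p q * t^q
    = ∑ p ∈ range (n+1), ∑ q ∈ range (s p), F p q * (x2^(q+1)/(q+1)) := by
  rw [intervalIntegral.integral_finset_sum]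
  · apply Finset.sum_congr rfl
    intro p hp
    rw [intervalIntegral.integral_finset_sum]
    · apply Finset.sum_congr rfl
      intro q hq
      rw [intervalIntegral.integral_const_mul, integral_pow]
      simp
    · intro q hq
      exact (Continuous.intervalIntegrable (by continuity) _ _)
  · intro p hp
    exact (Continuous.intervalIntegrable (by continuity) _ _)

lemma integ_poly2 (x1 : ℝ) (G : ℕ → ℕ → ℝ) (n : ℕ) (s : ℕ → ℕ) :
    ∫ t in (0:ℝ)..x1, ∑ p ∈ range (n+1), ∑ q ∈ range (s p), t^p * G p q
    = ∑ p ∈ range (n+1), ∑ q ∈ range (s p), (x1^(p+1)/(p+1)) * G p q := by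
  rw [intervalIntegral.integral_finset_sum]
  · apply Finset.sum_congr rfl
    intro p hp
    calc ∫ t in (0:ℝ)..x1, ∑ q ∈ range (s p), t^p * G p q
        = ∫ t in (0:ℝ)..x1, (∑ q ∈ range (s p), G p q) * t^p := by
          apply intervalIntegral.integral_congr
          intro t ht
          simp only [Finset.sum_mul, Finset.mul_sum]
          exact Finset.sum_congr rfl fun q hq => by ring
      _ = (∑ q ∈ range (s p), G p q) * (x1^(p+1)/(p+1)) := by
          rw [intervalIntegral.integral_const_mul, integral_pow]; simp
      _ = ∑ q ∈ range (s p), (x1^(p+1)/(p+1)) * G p q := by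
          rw [Finset.sum_mul]
          exact Finset.sum_congr rfl fun q hq => by ring
  · intro p hp
    exact (Continuous.intervalIntegrable (by continuity) _ _)

lemma final_sum (n : ℕ) (x1 x2 x3 : ℝ) :
    x3 * ∑ p ∈ range (n+1), ∑ q ∈ range (n-p+1),
        (x1^(p+1)/(p+1)) * (x3^(n-p-q) * (x2^(q+1)/(q+1)))
    = ∑ k ∈ compositions3 (n+3),
        x1 ^ (k 0) / ((k 0 : ℕ) : ℝ) * (x2 ^ (k 1) / ((k 1 : ℕ) : ℝ)) * x3 ^ (k 2) := by
  rw [Finset.mul_sum]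
  simp_rw [Finset.mul_sum]
  rw [Finset.sum_sigma']
  refine Finset.sum_nbij' (i := fun x => ![x.1 + 1, x.2 + 1, n - x.1 - x.2 + 1])
    (j := fun k => ⟨k 0 - 1, k 1 - 1⟩) ?_ ?_ ?_ ?_ ?_
  · rintro ⟨p, q⟩ hx
    simp only [Finset.mem_sigma, Finset.mem_range] at hx
    simp only [compositions3, Finset.mem_filter, Finset.Nat.mem_antidiagonalTuple,
      Fin.sum_univ_three]
    constructor
    · simp only [Matrix.cons_val_zero, Matrix.cons_val_one, Matrix.head_cons,
        Matrix.cons_val_two, Matrix.tail_cons]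
      omega
    · intro i
      fin_cases i <;> simp
  · rintro k hk
    simp only [compositions3, Finset.mem_filter, Finset.Nat.mem_antidiagonalTuple,
      Fin.sum_univ_three] at hk
    obtain ⟨hsum, hpos⟩ := hk
    have h0 := hpos 0; have h1 := hpos 1; have h2 := hpos 2
    simp only [Finset.mem_sigma, Finset.mem_range]
    omega
  · rintro ⟨p, q⟩ hx
    simp
  · rintro k hk
    simp only [compositions3, Finset.mem_filter, Finset.Nat.mem_antidiagonalTuple,
      Fin.sum_univ_three] at hk
    obtain ⟨hsum, hpos⟩ := hk
    have h0 := hpos 0; have h1 := hpos 1; have h2 := hpos 2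
    funext i
    fin_cases i <;> simp <;> omega
  · rintro ⟨p, q⟩ hx
    simp only [Finset.mem_sigma, Finset.mem_range] at hx
    simp only [Matrix.cons_val_zero, Matrix.cons_val_one, Matrix.head_cons,
      Matrix.cons_val_two, Matrix.tail_cons]
    push_cast
    rw [pow_succ x3 (n - p - q)]
    ring

/-- Integral formula for the 3-map `W₃` on the monomial `f(z) = z^m`:
`W₃[z^m](x₁,x₂,x₃) = ∑_{k₁+k₂+k₃=m, kᵢ ≥ 1} (x₁^{k₁}/k₁)(x₂^{k₂}/k₂) x₃^{k₃}`.
(The integrand's junk values on the measure-zero set where some denominator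
vanishes do not affect the integral.) -/
theorem W3_monomial (m : ℕ) (hm : 3 ≤ m) (x1 x2 x3 : ℝ) (hx3 : x3 ≠ 0) :
    x3 *
      ∫ ξ1 in (0 : ℝ)..x1, ∫ ξ2 in (0 : ℝ)..x2,
        (ξ1 ^ m / (ξ1 * (ξ1 - x3) * (ξ1 - ξ2))
          - ξ2 ^ m / (ξ2 * (ξ2 - x3) * (ξ1 - ξ2))
          + x3 ^ m / (x3 * (ξ1 - x3) * (ξ2 - x3)))
    = ∑ k ∈ compositions3 m,
        x1 ^ (k 0) / ((k 0 : ℕ) : ℝ) * (x2 ^ (k 1) / ((k 1 : ℕ) : ℝ)) * x3 ^ (k 2) := by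
  obtain ⟨n, rfl⟩ : ∃ n, m = n + 3 := ⟨m - 3, by omega⟩
  have hinner : ∀ ξ1 : ℝ, ξ1 ≠ 0 → ξ1 ≠ x3 →
      (∫ ξ2 in (0:ℝ)..x2,
        (ξ1 ^ (n+3) / (ξ1 * (ξ1 - x3) * (ξ1 - ξ2))
          - ξ2 ^ (n+3) / (ξ2 * (ξ2 - x3) * (ξ1 - ξ2))
          + x3 ^ (n+3) / (x3 * (ξ1 - x3) * (ξ2 - x3))))
      = ∑ p ∈ range (n+1), ∑ q ∈ range (n-p+1),
          (ξ1^p * x3^(n-p-q)) * (x2^(q+1)/(q+1)) := by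
    intro ξ1 h0 h3
    have hmz : (MeasureTheory.volume ({0, x3, ξ1} : Set ℝ)) = 0 :=
      (Set.toFinite _).measure_zero _
    have hae : ∀ᵐ ξ2 : ℝ, ξ2 ∉ ({0, x3, ξ1} : Set ℝ) :=
      MeasureTheory.measure_eq_zero_iff_ae_notMem.mp hmz
    have hcong : (∫ ξ2 in (0:ℝ)..x2,
        (ξ1 ^ (n+3) / (ξ1 * (ξ1 - x3) * (ξ1 - ξ2))
          - ξ2 ^ (n+3) / (ξ2 * (ξ2 - x3) * (ξ1 - ξ2))
          + x3 ^ (n+3) / (x3 * (ξ1 - x3) * (ξ2 - x3))))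
        = ∫ ξ2 in (0:ℝ)..x2, ∑ p ∈ range (n+1), ∑ q ∈ range (n-p+1),
            (ξ1^p * x3^(n-p-q)) * ξ2^q := by
      apply intervalIntegral.integral_congr_ae
      filter_upwards [hae] with ξ2 hξ2 _
      simp only [Set.mem_insert_iff, Set.mem_singleton_iff, not_or] at hξ2
      obtain ⟨h20, h23, h21⟩ := hξ2
      have := triple ξ1 ξ2 x3 h0 h20 hx3 (Ne.symm h21) h3 h23 n
      rw [this]
    rw [hcong, integ_poly x2 (fun p q => ξ1^p * x3^(n-p-q)) n (fun p => n - p + 1)]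
  have hmz1 : (MeasureTheory.volume ({0, x3} : Set ℝ)) = 0 :=
    (Set.toFinite _).measure_zero _
  have hae1 : ∀ᵐ ξ1 : ℝ, ξ1 ∉ ({0, x3} : Set ℝ) :=
    MeasureTheory.measure_eq_zero_iff_ae_notMem.mp hmz1
  have houter : (∫ ξ1 in (0:ℝ)..x1, ∫ ξ2 in (0:ℝ)..x2,
        (ξ1 ^ (n+3) / (ξ1 * (ξ1 - x3) * (ξ1 - ξ2))
          - ξ2 ^ (n+3) / (ξ2 * (ξ2 - x3) * (ξ1 - ξ2))
          + x3 ^ (n+3) / (x3 * (ξ1 - x3) * (ξ2 - x3))))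
      = ∫ ξ1 in (0:ℝ)..x1, ∑ p ∈ range (n+1), ∑ q ∈ range (n-p+1),
          ξ1^p * (x3^(n-p-q) * (x2^(q+1)/(q+1))) := by
    apply intervalIntegral.integral_congr_ae
    filter_upwards [hae1] with ξ1 hξ1 _
    simp only [Set.mem_insert_iff, Set.mem_singleton_iff, not_or] at hξ1
    rw [hinner ξ1 hξ1.1 hξ1.2]
    exact Finset.sum_congr rfl fun p _ => Finset.sum_congr rfl fun q _ => by ring
  rw [houter, integ_poly2 x1 (fun p q => x3^(n-p-q) * (x2^(q+1)/(q+1))) n (fun p => n - p + 1)]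
  exact final_sum n x1 x2 x3
end

section
/- Cauchy integral representation of complete homogeneous symmetric polynomials: Let j ∈ ℕ, j ≥ 1, let m ≥ 0 be an integer, let ξ_1, …, ξ_j be complex numbers, and let R > max_{1 ≤ k ≤ j} |ξ_k|. Then (1/(2πi)) ∮_{|ζ|=R} ζ^{j−1+m} / ∏_{k=1}^{j} (ζ − ξ_k) dζ = h_m(ξ_1, …, ξ_j), where the contour integral is taken counterclockwise over the circle of radius R centered at 0. -/
open Finset Metric Real Filter


lemma neAux {j : ℕ} {ξ : Fin j → ℂ} {R : ℝ} (hR : ∀ k, ‖ξ k‖ < R)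
    {z : ℂ} (hz : R ≤ ‖z‖) (k : Fin j) : z - ξ k ≠ 0 := by
  intro h
  rw [sub_eq_zero] at h
  exact absurd (h ▸ hz) (not_le.2 (hR k))

lemma prodNeAux {j : ℕ} {ξ : Fin j → ℂ} {R : ℝ} (hR : ∀ k, ‖ξ k‖ < R)
    {z : ℂ} (hz : R ≤ ‖z‖) : (∏ k : Fin j, (z - ξ k)) ≠ 0 := by
  rw [Finset.prod_ne_zero_iff]
  exact fun k _ => neAux hR hz k

lemma intAux {j p : ℕ} (ξ : Fin j → ℂ) {R : ℝ} (hR0 : 0 ≤ R)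
    (hR : ∀ k, ‖ξ k‖ < R) :
    CircleIntegrable (fun ζ : ℂ => ζ ^ p / ∏ k : Fin j, (ζ - ξ k)) 0 R := by
  apply ContinuousOn.circleIntegrable hR0
  apply ContinuousOn.div (by fun_prop) (by fun_prop)
  intro z hz
  have hz' : R ≤ ‖z‖ := by
    rw [mem_sphere_zero_iff_norm] at hz
    rw [hz]
  exact prodNeAux hR hz'

lemma diffAux {j p : ℕ} (ξ : Fin j → ℂ) {R : ℝ}
    (hR : ∀ k, ‖ξ k‖ < R) {z : ℂ} (hz : R ≤ ‖z‖) :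
    DifferentiableAt ℂ (fun ζ : ℂ => ζ ^ p / ∏ k : Fin j, (ζ - ξ k)) z := by
  exact DifferentiableAt.div (by fun_prop)
    (DifferentiableAt.fun_finsetProd fun k _ => by fun_prop) (prodNeAux hR hz)

lemma vanishAux {j p : ℕ} (hp : p + 2 ≤ j) (ξ : Fin j → ℂ) {R : ℝ}
    (hR : ∀ k, ‖ξ k‖ < R) :
    (∮ ζ in C((0 : ℂ), R), ζ ^ p / ∏ k : Fin j, (ζ - ξ k)) = 0 := by
  have hj : 0 < j := by omega
  have : Nonempty (Fin j) := ⟨⟨0, hj⟩⟩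
  set f : ℂ → ℂ := fun ζ => ζ ^ p / ∏ k : Fin j, (ζ - ξ k) with hf
  set M : ℝ := Finset.univ.sup' Finset.univ_nonempty (fun k => ‖ξ k‖) with hM
  have hMk : ∀ k, ‖ξ k‖ ≤ M := fun k => Finset.le_sup' (f := fun k => ‖ξ k‖) (Finset.mem_univ k)
  have hMR : M < R := (Finset.sup'_lt_iff _).2 fun k _ => hR k
  have hM0 : 0 ≤ M := le_trans (norm_nonneg _) (hMk (Classical.arbitrary _))
  have hR0 : 0 < R := lt_of_le_of_lt hM0 hMR
  -- the integral does not depend on the radius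
  have hconst : ∀ r : ℝ, R ≤ r →
      (∮ ζ in C((0 : ℂ), R), f ζ) = ∮ ζ in C((0 : ℂ), r), f ζ := by
    intro r hr
    refine (Complex.circleIntegral_eq_of_differentiable_on_annulus_off_countable hR0 hr
      Set.countable_empty ?_ ?_).symm
    · intro z hz
      have hz' : R ≤ ‖z‖ := by
        have := hz.2
        simp only [mem_ball, Complex.dist_eq, sub_zero, not_lt] at this
        exact this
      exact (diffAux ξ hR hz').continuousAt.continuousWithinAt
    · intro z hz
      have hz' : R ≤ ‖z‖ := by
        have := hz.1.2
        simp only [mem_closedBall, Complex.dist_eq, sub_zero, not_le] at this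
        exact this.le
      exact diffAux ξ hR hz'
  -- bound on circle of radius r
  have hbound : ∀ r : ℝ, R ≤ r →
      ‖∮ ζ in C((0 : ℂ), R), f ζ‖ ≤ 2 * π * r * (r ^ p / (r - M) ^ j) := by
    intro r hr
    rw [hconst r hr]
    refine circleIntegral.norm_integral_le_of_norm_le_const (le_trans hR0.le hr) ?_
    intro z hz
    rw [mem_sphere_zero_iff_norm] at hz
    have hzabs : ‖z‖ = r := by rw [hz]
    have hrM : 0 < r - M := by linarith
    have hden : ∀ k, r - M ≤ ‖z - ξ k‖ := by
      intro k
      calc r - M ≤ ‖z‖ - ‖ξ k‖ := by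
            rw [hzabs]; linarith [hMk k]
        _ ≤ ‖z - ξ k‖ := by
            have := norm_sub_norm_le z (ξ k)
            simpa using this
    have hprod : (r - M) ^ j ≤ ∏ k : Fin j, ‖z - ξ k‖ := by
      calc (r - M) ^ j = ∏ _k : Fin j, (r - M) := by
            rw [Finset.prod_const, Finset.card_univ, Fintype.card_fin]
        _ ≤ ∏ k : Fin j, ‖z - ξ k‖ :=
            Finset.prod_le_prod (fun k _ => hrM.le) (fun k _ => hden k)
    have hprodpos : (0:ℝ) < ∏ k : Fin j, ‖z - ξ k‖ :=
      lt_of_lt_of_le (pow_pos hrM j) hprod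
    rw [hf]
    simp only [norm_div, norm_pow, norm_prod, hzabs]
    exact div_le_div_of_nonneg_left (pow_nonneg (by linarith) p) (pow_pos hrM j) hprod
  -- the bound tends to 0
  have hq1 : 1 ≤ j - (p + 1) := by omega
  set q : ℕ := j - (p + 1) with hq
  have hjq : j = (p + 1) + q := by omega
  have h1 : Tendsto (fun r : ℝ => r - M) atTop atTop := by
    simpa [sub_eq_add_neg] using tendsto_atTop_add_const_right atTop (-M) tendsto_id
  have h2 : Tendsto (fun r : ℝ => M / (r - M)) atTop (nhds 0) :=
    Tendsto.div_atTop tendsto_const_nhds h1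
  have h3 : Tendsto (fun r : ℝ => 1 + M / (r - M)) atTop (nhds 1) := by
    simpa using tendsto_const_nhds.add h2
  have h4 : Tendsto (fun r : ℝ => (1 + M / (r - M)) ^ (p + 1)) atTop (nhds 1) := by
    simpa using h3.pow (p + 1)
  have h5 : Tendsto (fun r : ℝ => ((r - M)⁻¹) ^ q) atTop (nhds 0) := by
    simpa [zero_pow (by omega : q ≠ 0)] using (h1.inv_tendsto_atTop).pow q
  have hg : Tendsto (fun r : ℝ => 2 * π * ((1 + M / (r - M)) ^ (p + 1) * ((r - M)⁻¹) ^ q))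
      atTop (nhds 0) := by
    simpa using tendsto_const_nhds.mul (h4.mul h5)
  have heq : (fun r : ℝ => 2 * π * r * (r ^ p / (r - M) ^ j))
      =ᶠ[atTop] fun r => 2 * π * ((1 + M / (r - M)) ^ (p + 1) * ((r - M)⁻¹) ^ q) := by
    filter_upwards [eventually_ge_atTop R] with r hr
    have hrM : 0 < r - M := by linarith
    have e1 : 1 + M / (r - M) = r / (r - M) := by field_simp; ring
    rw [e1, div_pow, hjq, pow_add]
    have h2' : ((r - M) ^ (p + 1) : ℝ) ≠ 0 := by positivity
    have h3' : ((r - M) ^ q : ℝ) ≠ 0 := by positivity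
    field_simp
    rw [one_div, inv_pow, mul_comm ((r - M) ^ q), mul_inv_cancel_right₀ h3', pow_succ']
  have hT : Tendsto (fun r : ℝ => 2 * π * r * (r ^ p / (r - M) ^ j)) atTop (nhds 0) :=
    hg.congr' heq.symm
  have hle : ‖∮ ζ in C((0 : ℂ), R), f ζ‖ ≤ 0 :=
    ge_of_tendsto hT (by filter_upwards [eventually_ge_atTop R] with r hr using hbound r hr)
  rw [norm_le_zero_iff] at hle
  simpa [hf] using hle

lemma cauchyPow (m : ℕ) (w : ℂ) {R : ℝ} (hw : ‖w‖ < R) :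
    (∮ ζ in C((0 : ℂ), R), ζ ^ m / (ζ - w)) = 2 * π * Complex.I * w ^ m := by
  have hd : DifferentiableOn ℂ (fun z : ℂ => z ^ m) (closedBall 0 R) :=
    (differentiable_pow m).differentiableOn
  have hw' : w ∈ ball (0 : ℂ) R := by
    simpa [mem_ball, Complex.dist_eq] using hw
  have := hd.circleIntegral_sub_inv_smul hw'
  simp only [smul_eq_mul, ← div_eq_inv_mul] at this
  simpa using this

lemma splitAux (j p : ℕ) (ξ : Fin (j + 1) → ℂ) {R : ℝ}
    (hR : ∀ k, ‖ξ k‖ < R) :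
    (∮ ζ in C((0 : ℂ), R), ζ ^ (p + 1) / ∏ k : Fin (j + 1), (ζ - ξ k))
    = (∮ ζ in C((0 : ℂ), R), ζ ^ p / ∏ k : Fin j, (ζ - ξ k.succ))
      + ξ 0 * ∮ ζ in C((0 : ℂ), R), ζ ^ p / ∏ k : Fin (j + 1), (ζ - ξ k) := by
  have hR0 : 0 ≤ R := le_trans (norm_nonneg (ξ 0)) (hR 0).le
  have int1 : CircleIntegrable (fun ζ : ℂ => ζ ^ p / ∏ k : Fin j, (ζ - ξ k.succ)) 0 R :=
    intAux (fun k => ξ k.succ) hR0 (fun k => hR k.succ)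
  have int2 : CircleIntegrable
      (fun ζ : ℂ => -(ξ 0) * (ζ ^ p / ∏ k : Fin (j + 1), (ζ - ξ k))) 0 R :=
    (intAux ξ hR0 hR).const_mul (-(ξ 0))
  have key : (∮ ζ in C((0 : ℂ), R), ζ ^ (p + 1) / ∏ k : Fin (j + 1), (ζ - ξ k))
      = ∮ ζ in C((0 : ℂ), R), ((fun ζ : ℂ => ζ ^ p / ∏ k : Fin j, (ζ - ξ k.succ)) ζ
          - (fun ζ : ℂ => -(ξ 0) * (ζ ^ p / ∏ k : Fin (j + 1), (ζ - ξ k))) ζ) := by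
    refine circleIntegral.integral_congr hR0 ?_
    intro z hz
    have hz' : R ≤ ‖z‖ := by
      rw [mem_sphere_zero_iff_norm] at hz
      rw [hz]
    have h0 : z - ξ 0 ≠ 0 := neAux hR hz' 0
    have htail : (∏ k : Fin j, (z - ξ k.succ)) ≠ 0 :=
      prodNeAux (fun k => hR k.succ) hz'
    simp only [Fin.prod_univ_succ]
    field_simp
    ring
  rw [key, circleIntegral.integral_sub int1 int2,
    circleIntegral.integral_const_mul]
  ring

lemma peelAux (j : ℕ) (hj : 1 ≤ j) (m : ℕ) (ξ : Fin (j + 1) → ℂ) {R : ℝ}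
    (hR : ∀ k, ‖ξ k‖ < R) :
    (∮ ζ in C((0 : ℂ), R), ζ ^ (j + m) / ∏ k : Fin (j + 1), (ζ - ξ k))
    = ∑ ab ∈ Finset.HasAntidiagonal.antidiagonal m, ξ 0 ^ ab.1 *
        (∮ ζ in C((0 : ℂ), R), ζ ^ (j - 1 + ab.2) / ∏ k : Fin j, (ζ - ξ k.succ)) := by
  induction m with
  | zero =>
    have e : j + 0 = (j - 1) + 1 := by omega
    rw [e, splitAux j (j - 1) ξ hR, vanishAux (by omega) ξ hR]
    have e2 : j - 1 + 0 = j - 1 := by omega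
    simp [e2]
  | succ m ih =>
    have e : j + (m + 1) = (j + m) + 1 := by omega
    rw [e, splitAux j (j + m) ξ hR, ih, Finset.Nat.sum_antidiagonal_succ]
    have e2 : j - 1 + (m + 1) = j + m := by omega
    rw [e2, Finset.mul_sum]
    congr 1
    · ring
    · refine Finset.sum_congr rfl fun p _ => ?_
      ring

lemma sumTupleSucc {M : Type*} [AddCommMonoid M] (j m : ℕ) (f : (Fin (j + 1) → ℕ) → M) :
    ∑ l ∈ Finset.Nat.antidiagonalTuple (j + 1) m, f l
    = ∑ ab ∈ Finset.HasAntidiagonal.antidiagonal m,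
        ∑ l ∈ Finset.Nat.antidiagonalTuple j ab.2, f (Fin.cons ab.1 l) := by
  rw [Finset.sum_sigma']
  refine Finset.sum_nbij'
    (fun l => ⟨(l 0, ∑ i : Fin j, Fin.tail l i), Fin.tail l⟩)
    (fun x => Fin.cons x.1.1 x.2) ?_ ?_ ?_ ?_ ?_
  · intro l hl
    rw [Finset.Nat.mem_antidiagonalTuple] at hl
    rw [Finset.mem_sigma, Finset.Nat.mem_antidiagonalTuple, Finset.HasAntidiagonal.mem_antidiagonal]
    constructor
    · rw [← hl, Fin.sum_univ_succ]
      rfl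
    · rfl
  · intro x hx
    rw [Finset.mem_sigma, Finset.Nat.mem_antidiagonalTuple, Finset.HasAntidiagonal.mem_antidiagonal] at hx
    rw [Finset.Nat.mem_antidiagonalTuple]
    simp only [Fin.sum_univ_succ, Fin.cons_zero, Fin.cons_succ]
    rw [hx.2, hx.1]
  · intro l _
    exact Fin.cons_self_tail l
  · intro x hx
    rw [Finset.mem_sigma, Finset.Nat.mem_antidiagonalTuple, Finset.HasAntidiagonal.mem_antidiagonal] at hx
    refine Sigma.ext ?_ ?_
    · simp only [Fin.cons_zero, Fin.tail_cons]
      rw [hx.2]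
    · simp [Fin.tail_cons]
  · intro l _
    rw [Fin.cons_self_tail]

lemma twoPiINeZero : (2 * (Real.pi : ℂ) * Complex.I) ≠ 0 := by
  simp [Real.pi_ne_zero, Complex.I_ne_zero, Complex.ofReal_ne_zero]

lemma mainAux : ∀ j : ℕ, 1 ≤ j → ∀ (m : ℕ) (ξ : Fin j → ℂ) (R : ℝ),
    (∀ k, ‖ξ k‖ < R) →
    (1 / (2 * (Real.pi : ℂ) * Complex.I)) *
      (∮ ζ in C((0 : ℂ), R), ζ ^ (j - 1 + m) / ∏ k : Fin j, (ζ - ξ k))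
    = ∑ l ∈ Finset.Nat.antidiagonalTuple j m, ∏ i : Fin j, ξ i ^ l i := by
  intro j
  induction j with
  | zero => omega
  | succ n ih =>
    intro _ m ξ R hR
    rcases Nat.eq_zero_or_pos n with hn | hn
    · subst hn
      have e1 : (∮ ζ in C((0 : ℂ), R), ζ ^ (0 + 1 - 1 + m) / ∏ k : Fin 1, (ζ - ξ k))
          = ∮ ζ in C((0 : ℂ), R), ζ ^ m / (ζ - ξ 0) := by
        apply circleIntegral.integral_congr
          (le_trans (norm_nonneg (ξ 0)) (hR 0).le)
        intro z _
        simp [Fin.prod_univ_one]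
      rw [e1, cauchyPow m (ξ 0) (hR 0)]
      rw [Finset.Nat.antidiagonalTuple_one, Finset.sum_singleton]
      rw [Fin.prod_univ_one]
      rw [one_div, inv_mul_eq_div, mul_comm, mul_div_assoc, div_self twoPiINeZero, mul_one]
      norm_num
    · have e : n + 1 - 1 + m = n + m := by omega
      rw [e, peelAux n hn m ξ hR, Finset.mul_sum,
        sumTupleSucc n m (fun l => ∏ i : Fin (n + 1), ξ i ^ l i)]
      refine Finset.sum_congr rfl fun ab _ => ?_
      simp only [Fin.prod_univ_succ, Fin.cons_zero, Fin.cons_succ]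
      rw [← Finset.mul_sum, ← ih hn ab.2 (fun k => ξ k.succ) R (fun k => hR k.succ)]
      ring

/-- Cauchy integral representation of the complete homogeneous symmetric
polynomial: for `R` larger than the modulus of every `ξ_k`,
`(1/(2πi)) ∮_{|ζ|=R} ζ^{j−1+m} / ∏ₖ (ζ − ξₖ) dζ = h_m(ξ₁, …, ξ_j)`,
the contour being the counterclockwise circle of radius `R` about `0`. -/
theorem cauchy_complete_homogeneous (j : ℕ) (hj : 1 ≤ j) (m : ℕ) (ξ : Fin j → ℂ)
    (R : ℝ) (hR : ∀ k, ‖ξ k‖ < R) :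
    (1 / (2 * (Real.pi : ℂ) * Complex.I)) *
      (∮ ζ in C((0 : ℂ), R), ζ ^ (j - 1 + m) / ∏ k : Fin j, (ζ - ξ k))
    = ∑ l ∈ Finset.Nat.antidiagonalTuple j m, ∏ i : Fin j, ξ i ^ l i :=
  mainAux j hj m ξ R hR
end
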